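/- Let p be a point in a face f and let (a,d) be a port candidate with a on the boundary of f. For any two points p, q in f that can be joined by an orthogonal polyline inside f with at most b bends, the bend distances satisfy |bdist(p,(a,d)) - bdist(q,(a,d))| ≤ b + 1. -/

import Mathlib

/-- A point in the plane. -/
abbrev Pt := ℝ × ℝ

/-- Two points span an axis-parallel (horizontal or vertical) segment. -/
def AxisParallel (a b : Pt) : Prop := a.1 = b.1 ∨ a.2 = b.2

/-- An orthogonal polyline inside the region `f`: a list of at least two points whose
consecutive segments are axis-parallel and contained in `f`. -/
def IsOrthoPolyline (f : Set Pt) (l : List Pt) : Prop :=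
  2 ≤ l.length ∧ l.Chain' (fun a b => AxisParallel a b ∧ segment ℝ a b ⊆ f)

/-- `PolyFrom f p q l`: `l` is an orthogonal polyline inside `f` from `p` to `q`. -/
def PolyFrom (f : Set Pt) (p q : Pt) (l : List Pt) : Prop :=
  IsOrthoPolyline f l ∧ l.head? = some p ∧ l.getLast? = some q

/-- The four axis directions. -/
inductive Dir | up | down | left | right
deriving DecidableEq

/-- The unit vector of a direction. -/
def Dir.vec : Dir → Pt
  | .up => (0, 1)
  | .down => (0, -1)
  | .left => (-1, 0)
  | .right => (1, 0)

/-- The polyline `l` arrives at its final point from direction `d`: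
its last segment travels in direction `d`. -/
def ArrivesFrom (d : Dir) (l : List Pt) : Prop :=
  ∃ x a : Pt, [x, a] <:+ l ∧ ∃ t : ℝ, 0 < t ∧ a - x = t • d.vec

/-- The bend distance from a point `p` inside a face `f` to a port candidate `(a, d)`:
the minimum number of bends of an orthogonal polyline inside `f` from `p` to `a` arriving
at `a` from direction `d`.  (A polyline on `m` points has `m - 2` bends; collinear
consecutive segments can always be merged, so the minimum is unaffected.) -/
noncomputable def bdist (f : Set Pt) (p a : Pt) (d : Dir) : ℕ :=
  sInf {b | ∃ l, PolyFrom f p a l ∧ ArrivesFrom d l ∧ l.length - 2 = b}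

/-- `F` is a histogram over the horizontal baseline `δ` from `(x₁, y₀)` to `(x₂, y₀)`:
the baseline is a segment on (the boundary of) `F`, and every point of `F` is reachable by a
vertical ray starting at the baseline and orthogonal to it. -/
def IsHistogram (F : Set Pt) (y₀ x₁ x₂ : ℝ) : Prop :=
  segment ℝ ((x₁, y₀) : Pt) ((x₂, y₀) : Pt) ⊆ F ∧
  ∀ p ∈ F, ((p.1, y₀) : Pt) ∈ segment ℝ ((x₁, y₀) : Pt) ((x₂, y₀) : Pt) ∧
    segment ℝ ((p.1, y₀) : Pt) p ⊆ F

lemma poly_rev (f : Set Pt) (p q : Pt) (l : List Pt) (h : PolyFrom f p q l) :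
    PolyFrom f q p l.reverse := by
  obtain ⟨⟨hlen, hch⟩, hh, hl⟩ := h
  refine ⟨⟨by simpa using hlen, ?_⟩, ?_, ?_⟩
  · unfold List.Chain' at hch ⊢; rw [List.isChain_reverse]
    refine hch.imp ?_
    intro x y ⟨h1, h2⟩
    exact ⟨h1.imp Eq.symm Eq.symm, by rwa [segment_symm]⟩
  · rwa [List.head?_reverse]
  · rwa [List.getLast?_reverse]

lemma poly_concat (f : Set Pt) (p q r : Pt) (l l' : List Pt)
    (h : PolyFrom f p q l) (h' : PolyFrom f q r l') :
    PolyFrom f p r (l.dropLast ++ l') ∧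
      (l.dropLast ++ l').length = l.length + l'.length - 1 ∧ l' <:+ (l.dropLast ++ l') := by
  obtain ⟨⟨hlen, hch⟩, hh, hl⟩ := h
  obtain ⟨⟨hlen', hch'⟩, hh', hl'⟩ := h'
  have hne : l ≠ [] := by rintro rfl; simp at hlen
  have hne' : l' ≠ [] := by rintro rfl; simp at hlen'
  obtain ⟨y, t, rfl⟩ := List.exists_cons_of_ne_nil hne'
  have hyq : y = q := by simpa using hh'
  subst hyq
  have hq : l.getLast hne = y := by rwa [List.getLast?_eq_getLast hne, Option.some_inj] at hl
  have hkey : l.dropLast ++ (y :: t) = l ++ t := by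
    conv_rhs => rw [← List.dropLast_append_getLast hne, hq]
    simp
  have hlen2 : (l.dropLast ++ (y :: t)).length = l.length + (y :: t).length - 1 := by
    rw [List.length_append, List.length_dropLast]; simp; omega
  refine ⟨⟨⟨by simp at hlen2 ⊢; omega, ?_⟩, ?_, ?_⟩, hlen2, List.suffix_append _ _⟩
  · rw [hkey]
    apply List.IsChain.append hch (hch'.tail)
    intro x hx z hz
    have hx' : x = y := by
      simp only [hl, Option.mem_def, Option.some_inj] at hx; exact hx.symm
    subst hx'
    unfold List.Chain' at hch'; rw [List.isChain_cons] at hch'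
    exact hch'.1 z hz
  · rw [List.head?_append_of_ne_nil]
    · rcases l with _ | ⟨x, _ | ⟨z, t''⟩⟩ <;> simp_all
    · rw [← List.length_pos_iff, List.length_dropLast]; omega
  · rw [List.getLast?_append_of_ne_nil _ (by simp : (y :: t) ≠ [])]
    exact hl'

lemma step (f : Set Pt) (a : Pt) (d : Dir) (u v : Pt) (m : List Pt) (b : ℕ)
    (hm : PolyFrom f u v m) (hb : m.length - 2 ≤ b) (k : ℕ)
    (hk : k ∈ {k | ∃ l, PolyFrom f v a l ∧ ArrivesFrom d l ∧ l.length - 2 = k}) :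
    ∃ k' ∈ {k | ∃ l, PolyFrom f u a l ∧ ArrivesFrom d l ∧ l.length - 2 = k}, k' ≤ k + b + 1 := by
  obtain ⟨l', hl', harr, hlen⟩ := hk
  obtain ⟨hP, hL, hsuf⟩ := poly_concat f u v a m l' hm hl'
  refine ⟨(m.dropLast ++ l').length - 2, ⟨m.dropLast ++ l', hP, ?_, rfl⟩, ?_⟩
  · obtain ⟨x, a0, hs, ht⟩ := harr
    exact ⟨x, a0, hs.trans hsuf, ht⟩
  · have h1 : 2 ≤ m.length := hm.1.1
    have h2 : 2 ≤ l'.length := hl'.1.1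
    omega

/-- Let `f` be a face (an orthogonal region) and `(a, d)` a port candidate with `a` on the
boundary of `f`.  For any two points `p, q ∈ f` that can be joined by an orthogonal polyline
inside `f` with at most `b` bends, the bend distances satisfy
`|bdist(p,(a,d)) - bdist(q,(a,d))| ≤ b + 1`. -/
theorem stmt_1 (f : Set Pt) (a : Pt) (d : Dir) (p q : Pt)
    (hp : p ∈ f) (hq : q ∈ f) (b : ℕ)
    (hpoly : ∃ l, PolyFrom f p q l ∧ l.length - 2 ≤ b) :
    |(bdist f p a d : ℤ) - (bdist f q a d : ℤ)| ≤ b + 1 := by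
  obtain ⟨m, hm, hmb⟩ := hpoly
  have hmrev : PolyFrom f q p m.reverse := poly_rev f p q m hm
  have hmrevb : m.reverse.length - 2 ≤ b := by rw [List.length_reverse]; exact hmb
  set Sp := {k | ∃ l, PolyFrom f p a l ∧ ArrivesFrom d l ∧ l.length - 2 = k} with hSp
  set Sq := {k | ∃ l, PolyFrom f q a l ∧ ArrivesFrom d l ∧ l.length - 2 = k} with hSq
  rcases Set.eq_empty_or_nonempty Sq with hQ | hQ
  · have hP : Sp = ∅ := by
      rw [Set.eq_empty_iff_forall_notMem]
      intro k hk
      obtain ⟨k', hk', _⟩ := step f a d q p m.reverse b hmrev hmrevb k hk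
      rw [Set.eq_empty_iff_forall_notMem] at hQ
      exact hQ k' hk'
    unfold bdist
    rw [← hSp, ← hSq, hP, hQ]
    simp [Nat.sInf_empty]
    positivity
  · have hP : Sp.Nonempty := by
      obtain ⟨k, hk⟩ := hQ
      obtain ⟨k', hk', _⟩ := step f a d p q m b hm hmb k hk
      exact ⟨k', hk'⟩
    have h1 : bdist f p a d ≤ bdist f q a d + b + 1 := by
      obtain ⟨k', hk', hle⟩ := step f a d p q m b hm hmb _ (Nat.sInf_mem hQ)
      exact le_trans (Nat.sInf_le hk') hle
    have h2 : bdist f q a d ≤ bdist f p a d + b + 1 := by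
      obtain ⟨k', hk', hle⟩ := step f a d q p m.reverse b hmrev hmrevb _ (Nat.sInf_mem hP)
      exact le_trans (Nat.sInf_le hk') hle
    rw [abs_sub_le_iff]
    constructor <;> push_cast <;> omega
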